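/- Let N ≥ 1 be an integer, P_max > 0, T > 0, R > 0, and define P_ε(Q) = 1 - [1 - γ(N, Q/P_max)/Γ(N)]·[1 - f(A(Q))], where f is the Gaussian Q-function and A(Q) = √T·(ln(1+Q) - R·ln 2)/√(1 - 1/(1+Q)²). Then P_ε is convex on the interval (max(Q₀, 2^R - 1), P_max·(N-1)), where Q₀ is the unique positive solution of ln(1+Q)/((1+Q)²-1) = 1/3. -/

import Mathlib

/-- The Gaussian Q-function. -/
noncomputable def gaussQ (x : ℝ) : ℝ :=
  ∫ t in Set.Ioi x, Real.exp (-t ^ 2 / 2) / Real.sqrt (2 * Real.pi)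

/-- The lower incomplete gamma function γ(s, x) = ∫₀^x t^{s-1} e^{-t} dt. -/
noncomputable def lowerGamma (s x : ℝ) : ℝ :=
  ∫ t in Set.Ioo 0 x, t ^ (s - 1) * Real.exp (-t)

open MeasureTheory Set

section Helpers

lemma convexOn_congr' {s : Set ℝ} {f g : ℝ → ℝ} (hf : ConvexOn ℝ s f)
    (h : Set.EqOn f g s) : ConvexOn ℝ s g :=
  ⟨hf.1, fun x hx y hy a b ha hb hab => by
    rw [← h hx, ← h hy, ← h (hf.1 hx hy ha hb hab)]
    exact hf.2 hx hy ha hb hab⟩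

lemma concaveOn_congr' {s : Set ℝ} {f g : ℝ → ℝ} (hf : ConcaveOn ℝ s f)
    (h : Set.EqOn f g s) : ConcaveOn ℝ s g :=
  ⟨hf.1, fun x hx y hy a b ha hb hab => by
    rw [← h hx, ← h hy, ← h (hf.1 hx hy ha hb hab)]
    exact hf.2 hx hy ha hb hab⟩

lemma concaveOn_comp_mono {s t : Set ℝ} {f g : ℝ → ℝ} (hg : ConcaveOn ℝ t g)
    (hf : ConcaveOn ℝ s f) (hmap : Set.MapsTo f s t) (hmono : MonotoneOn g t) :
    ConcaveOn ℝ s (fun x => g (f x)) := by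
  refine ⟨hf.1, fun x hx y hy a b ha hb hab => ?_⟩
  have h1 : a • f x + b • f y ≤ f (a • x + b • y) := hf.2 hx hy ha hb hab
  have hmem : a • f x + b • f y ∈ t := hg.1 (hmap hx) (hmap hy) ha hb hab
  have hmem2 : f (a • x + b • y) ∈ t := hmap (hf.1 hx hy ha hb hab)
  calc a • g (f x) + b • g (f y) ≤ g (a • f x + b • f y) :=
        hg.2 (hmap hx) (hmap hy) ha hb hab
    _ ≤ g (f (a • x + b • y)) := hmono hmem hmem2 h1

end Helpers

section Gauss

noncomputable def gpdf (t : ℝ) : ℝ := Real.exp (-t ^ 2 / 2) / Real.sqrt (2 * Real.pi)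

lemma gpdf_cont : Continuous gpdf := by
  unfold gpdf
  exact (Real.continuous_exp.comp ((continuous_pow 2).neg.div_const 2)).div_const _

lemma gpdf_nonneg (t : ℝ) : 0 ≤ gpdf t :=
  div_nonneg (Real.exp_pos _).le (Real.sqrt_nonneg _)

lemma gpdf_integrable : Integrable gpdf := by
  have h : Integrable (fun x : ℝ => Real.exp (-(1/2) * x ^ 2)) :=
    integrable_exp_neg_mul_sq (by norm_num)
  have h2 : Integrable (fun x : ℝ => Real.exp (-x ^ 2 / 2)) := by
    refine h.congr (Filter.Eventually.of_forall fun x => ?_)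
    ring_nf
  exact h2.div_const _

lemma gpdf_total : ∫ t, gpdf t = 1 := by
  unfold gpdf
  rw [MeasureTheory.integral_div]
  have h : ∫ t : ℝ, Real.exp (-t ^ 2 / 2) = ∫ t : ℝ, Real.exp (-(1/2) * t ^ 2) := by
    congr 1; funext t; ring_nf
  rw [h, integral_gaussian]
  rw [show Real.pi / (1/2) = 2 * Real.pi by ring]
  exact div_self (Real.sqrt_ne_zero'.2 (by positivity))

lemma gaussQ_eq_sub (x : ℝ) : gaussQ x = 1 - ∫ t in Set.Iic x, gpdf t := by
  have h := intervalIntegral.integral_Iic_add_Ioi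
    (gpdf_integrable.integrableOn (s := Iic x)) (gpdf_integrable.integrableOn (s := Ioi x))
  rw [gpdf_total] at h
  have h2 : gaussQ x = ∫ t in Set.Ioi x, gpdf t := rfl
  rw [h2]; linarith

lemma gaussQ_eq_sub' (x : ℝ) : gaussQ x = gaussQ 0 - ∫ t in (0:ℝ)..x, gpdf t := by
  rw [gaussQ_eq_sub, gaussQ_eq_sub,
    ← intervalIntegral.integral_Iic_sub_Iic (gpdf_integrable.integrableOn)
      (gpdf_integrable.integrableOn)]
  ring

lemma hasDerivAt_gaussQ (x : ℝ) : HasDerivAt gaussQ (-gpdf x) x := by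
  have h : gaussQ = fun y => gaussQ 0 - ∫ t in (0:ℝ)..y, gpdf t := funext gaussQ_eq_sub'
  rw [h]
  exact (intervalIntegral.integral_hasDerivAt_right
    (gpdf_cont.intervalIntegrable _ _)
    (gpdf_cont.stronglyMeasurableAtFilter _ _)
    gpdf_cont.continuousAt).const_sub _

lemma gaussQ_le_one (x : ℝ) : gaussQ x ≤ 1 := by
  rw [show (1:ℝ) = ∫ t, gpdf t from gpdf_total.symm]
  exact setIntegral_le_integral gpdf_integrable (Filter.Eventually.of_forall gpdf_nonneg)

lemma hasDerivAt_Phi (x : ℝ) : HasDerivAt (fun y => 1 - gaussQ y) (gpdf x) x := by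
  simpa using (hasDerivAt_gaussQ x).const_sub 1

lemma Phi_mono : Monotone (fun y => 1 - gaussQ y) := by
  have hd : ∀ x : ℝ, 0 ≤ deriv (fun y => 1 - gaussQ y) x := fun x => by
    rw [(hasDerivAt_Phi x).deriv]; exact gpdf_nonneg x
  exact monotone_of_deriv_nonneg (fun x => (hasDerivAt_Phi x).differentiableAt) hd

lemma gpdf_anti : AntitoneOn gpdf (Ioi (0:ℝ)) := by
  intro x hx y hy hxy
  unfold gpdf
  have : Real.exp (-y ^ 2 / 2) ≤ Real.exp (-x ^ 2 / 2) := by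
    apply Real.exp_le_exp.2; nlinarith [(mem_Ioi.1 hx).le, (mem_Ioi.1 hy).le]
  exact div_le_div_of_nonneg_right this (Real.sqrt_nonneg _) |>.trans_eq rfl

lemma Phi_concave : ConcaveOn ℝ (Ici (0:ℝ)) (fun y => 1 - gaussQ y) := by
  apply AntitoneOn.concaveOn_of_deriv (convex_Ici 0)
  · exact fun x _ => (hasDerivAt_Phi x).continuousAt.continuousWithinAt
  · exact fun x _ => (hasDerivAt_Phi x).differentiableAt.differentiableWithinAt
  · rw [interior_Ici]
    intro x hx y hy hxy
    rw [(hasDerivAt_Phi x).deriv, (hasDerivAt_Phi y).deriv]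
    exact gpdf_anti hx hy hxy

end Gauss

section LG

lemma psi_cont {a : ℝ} (ha : 0 ≤ a) : Continuous (fun t : ℝ => t ^ a * Real.exp (-t)) :=
  (Real.continuous_rpow_const ha).mul (Real.continuous_exp.comp continuous_neg)

lemma lowerGamma_eq (s : ℝ) {x : ℝ} (hx : 0 ≤ x) :
    lowerGamma s x = ∫ t in (0:ℝ)..x, t ^ (s - 1) * Real.exp (-t) := by
  rw [intervalIntegral.integral_of_le hx, MeasureTheory.integral_Ioc_eq_integral_Ioo]
  rfl

lemma lowerGamma_hasDerivAt (s : ℝ) (hs : 1 ≤ s - 1) {x : ℝ} (hx : 0 < x) :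
    HasDerivAt (lowerGamma s) (x ^ (s - 1) * Real.exp (-x)) x := by
  have hc : Continuous (fun t : ℝ => t ^ (s-1) * Real.exp (-t)) := psi_cont (by linarith)
  have hG : HasDerivAt (fun y => ∫ t in (0:ℝ)..y, t ^ (s - 1) * Real.exp (-t))
      (x ^ (s - 1) * Real.exp (-x)) x :=
    intervalIntegral.integral_hasDerivAt_right (hc.intervalIntegrable _ _)
      (hc.stronglyMeasurableAtFilter _ _) hc.continuousAt
  apply hG.congr_of_eventuallyEq
  filter_upwards [eventually_gt_nhds hx] with y hy
  exact lowerGamma_eq s hy.le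

lemma psi_monoOn {a : ℝ} (ha : 1 ≤ a) :
    MonotoneOn (fun t : ℝ => t ^ a * Real.exp (-t)) (Icc 0 a) := by
  apply monotoneOn_of_deriv_nonneg (convex_Icc 0 a) (psi_cont (by linarith)).continuousOn
  · intro t ht
    rw [interior_Icc] at ht
    exact (((Real.hasDerivAt_rpow_const (Or.inl ht.1.ne')).mul
      (((Real.hasDerivAt_exp (-t)).comp t
        (hasDerivAt_neg t)))).differentiableAt).differentiableWithinAt
  · intro t ht
    rw [interior_Icc] at ht
    have hd : HasDerivAt (fun t : ℝ => t ^ a * Real.exp (-t))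
        (a * t ^ (a-1) * Real.exp (-t) + t ^ a * (Real.exp (-t) * -1)) t :=
      (Real.hasDerivAt_rpow_const (Or.inl ht.1.ne')).mul
        ((Real.hasDerivAt_exp (-t)).comp t (hasDerivAt_neg t))
    rw [hd.deriv]
    have hta : t ^ a = t ^ (a - 1) * t := by
      rw [← Real.rpow_add_one ht.1.ne']; ring_nf
    rw [hta]
    have h1 : 0 ≤ t ^ (a-1) := Real.rpow_nonneg ht.1.le _
    have h2 : 0 < Real.exp (-t) := Real.exp_pos _
    have h3 : t ≤ a := ht.2.le
    have : a * t ^ (a - 1) * Real.exp (-t) + t ^ (a - 1) * t * (Real.exp (-t) * -1)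
        = t ^ (a-1) * Real.exp (-t) * (a - t) := by ring
    rw [this]
    have h4 : (0:ℝ) ≤ a - t := by linarith
    positivity

lemma lg_integrableOn_Ioi {s : ℝ} (hs : 0 < s) :
    IntegrableOn (fun t : ℝ => t ^ (s-1) * Real.exp (-t)) (Ioi 0) := by
  have := Real.GammaIntegral_convergent hs
  exact this.congr_fun (fun t ht => mul_comm _ _) measurableSet_Ioi

lemma lg_ae_nonneg {s : ℝ} (A : Set ℝ) (hA : MeasurableSet A) (hA' : A ⊆ Ioi 0) :
    0 ≤ᵐ[volume.restrict A] (fun t : ℝ => t ^ (s-1) * Real.exp (-t)) := by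
  filter_upwards [ae_restrict_mem hA] with t ht
  exact mul_nonneg (Real.rpow_nonneg (le_of_lt (hA' ht)) _) (Real.exp_pos _).le

lemma lowerGamma_mono {s : ℝ} (hs : 0 < s) {x y : ℝ} (hxy : x ≤ y) :
    lowerGamma s x ≤ lowerGamma s y := by
  unfold lowerGamma
  apply setIntegral_mono_set ((lg_integrableOn_Ioi hs).mono_set Ioo_subset_Ioi_self)
    (lg_ae_nonneg _ measurableSet_Ioo Ioo_subset_Ioi_self)
  exact HasSubset.Subset.eventuallyLE (Ioo_subset_Ioo_right hxy)

lemma lowerGamma_le_Gamma {s : ℝ} (hs : 0 < s) (x : ℝ) :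
    lowerGamma s x ≤ Real.Gamma s := by
  rw [Real.Gamma_eq_integral hs]
  have h : (∫ t in Ioi (0:ℝ), Real.exp (-t) * t ^ (s-1))
      = ∫ t in Ioi (0:ℝ), t ^ (s-1) * Real.exp (-t) := by
    apply setIntegral_congr_fun measurableSet_Ioi
    intro t _; exact mul_comm _ _
  rw [h]
  unfold lowerGamma
  apply setIntegral_mono_set (lg_integrableOn_Ioi hs)
    (lg_ae_nonneg _ measurableSet_Ioi (by rfl))
  exact HasSubset.Subset.eventuallyLE Ioo_subset_Ioi_self

end LG

section Ratio

lemma ratio_strictAnti : StrictAntiOn (fun x : ℝ => Real.log (1+x) / ((1+x)^2 - 1)) (Ioi 0) := by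
  have key : ∀ x : ℝ, 0 < x → HasDerivAt (fun x : ℝ => Real.log (1+x) / ((1+x)^2 - 1))
      ((1/(1+x) * ((1+x)^2 - 1) - Real.log (1+x) * (2*(1+x))) / ((1+x)^2-1)^2) x := by
    intro x hx
    have hu : (1:ℝ) < 1 + x := by linarith
    have hL : HasDerivAt (fun x : ℝ => Real.log (1+x)) (1/(1+x)) x := by
      have := (Real.hasDerivAt_log (by linarith : (1:ℝ)+x ≠ 0)).comp x
        ((hasDerivAt_id x).const_add 1)
      simpa [one_div, Function.comp_def] using this
    have hD : HasDerivAt (fun x : ℝ => (1+x)^2 - 1) (2*(1+x)) x := by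
      have := (((hasDerivAt_id x).const_add 1).pow 2).sub_const 1
      simpa [mul_comm] using this
    exact hL.div hD (by nlinarith)
  apply strictAntiOn_of_deriv_neg (convex_Ioi 0)
  · exact fun x hx => ((key x hx).continuousAt).continuousWithinAt
  · rw [interior_Ioi]
    intro x hx
    have hx' : (0:ℝ) < x := hx
    rw [(key x hx).deriv]
    have hu : (1:ℝ) < 1 + x := by linarith
    set u := 1 + x with hudef
    have hu0 : (0:ℝ) < u := by linarith
    have h2l : 1 - 1/u^2 < 2 * Real.log u := by
      have hlog := Real.log_lt_sub_one_of_pos (x := 1/u^2) (by positivity)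
        (by intro h; rw [div_eq_one_iff_eq (by positivity)] at h; nlinarith)
      rw [one_div, Real.log_inv, Real.log_pow] at hlog
      push_cast at hlog
      have : (u ^ 2)⁻¹ = 1 / u ^ 2 := (one_div _).symm
      rw [this] at hlog
      linarith
    have h4 : 1/u * (u^2 - 1) = u - 1/u := by field_simp
    have h5 : u - 1/u = (1 - 1/u^2) * u := by field_simp
    have h6 : (1 - 1/u^2) * u < (2 * Real.log u) * u :=
      mul_lt_mul_of_pos_right h2l hu0
    have hnum : 1/u * (u^2 - 1) - Real.log u * (2*u) < 0 := by
      rw [h4]; nlinarith [h5, h6]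
    apply div_neg_of_neg_of_pos hnum
    have hv : 0 < (1+x)^2 - 1 := by nlinarith
    exact pow_pos hv 2

lemma three_log_lt {Q₀ Q : ℝ} (h0 : 0 < Q₀) (hlt : Q₀ < Q)
    (heq : Real.log (1+Q₀) / ((1+Q₀)^2 - 1) = 1/3) :
    3 * Real.log (1+Q) < (1+Q)^2 - 1 := by
  have h : Real.log (1+Q) / ((1+Q)^2 - 1) < Real.log (1+Q₀) / ((1+Q₀)^2 - 1) :=
    ratio_strictAnti (mem_Ioi.2 h0) (mem_Ioi.2 (h0.trans hlt)) hlt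
  rw [heq] at h
  have hv : 0 < (1+Q)^2 - 1 := by nlinarith
  rw [div_lt_iff₀ hv] at h
  linarith

end Ratio

section B

noncomputable def Bfun (sT c Q : ℝ) : ℝ :=
  sT * ((Real.log (1+Q) - c) * (1+Q) / Real.sqrt ((1+Q)^2 - 1))

noncomputable def Bder (sT c Q : ℝ) : ℝ :=
  sT * (((1+Q)^2 - 1 - (Real.log (1+Q) - c)) / ((((1+Q)^2 - 1)) * Real.sqrt ((1+Q)^2 - 1)))

variable {sT c Q : ℝ}

lemma hl' (hQ : 0 < Q) : HasDerivAt (fun x : ℝ => Real.log (1+x)) (1/(1+Q)) Q := by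
  have := (Real.hasDerivAt_log (by linarith : (1:ℝ)+Q ≠ 0)).comp Q
    ((hasDerivAt_id Q).const_add 1)
  simpa [one_div, Function.comp_def] using this

lemma hv' (Q : ℝ) : HasDerivAt (fun x : ℝ => (1+x)^2 - 1) (2*(1+Q)) Q := by
  have := (((hasDerivAt_id Q).const_add 1).pow 2).sub_const 1
  simpa [mul_comm] using this

lemma hw' (hQ : 0 < Q) :
    HasDerivAt (fun x : ℝ => Real.sqrt ((1+x)^2 - 1))
      (1/(2*Real.sqrt ((1+Q)^2 - 1)) * (2*(1+Q))) Q := by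
  have hv0 : (0:ℝ) < (1+Q)^2 - 1 := by nlinarith
  exact (Real.hasDerivAt_sqrt hv0.ne').comp Q (hv' Q)

lemma Bfun_hasDerivAt (hQ : 0 < Q) : HasDerivAt (Bfun sT c) (Bder sT c Q) Q := by
  have hu0 : (0:ℝ) < 1 + Q := by linarith
  have hv0 : (0:ℝ) < (1+Q)^2 - 1 := by nlinarith
  have hw0 : (0:ℝ) < Real.sqrt ((1+Q)^2 - 1) := Real.sqrt_pos.2 hv0
  have hw2 : Real.sqrt ((1+Q)^2 - 1) ^ 2 = (1+Q)^2 - 1 := Real.sq_sqrt hv0.le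
  have hn : HasDerivAt (fun x : ℝ => (Real.log (1+x) - c) * (1+x))
      ((1/(1+Q)) * (1+Q) + (Real.log (1+Q) - c) * 1) Q :=
    ((hl' hQ).sub_const c).mul ((hasDerivAt_id Q).const_add 1)
  have hq := hn.div (hw' hQ) hw0.ne'
  have hB := hq.const_mul sT
  refine hB.congr_deriv ?_
  symm
  unfold Bder
  set w := Real.sqrt ((1+Q)^2 - 1)
  set l := Real.log (1+Q)
  rw [← hw2]
  congr 1
  rw [div_eq_div_iff (by positivity) (by positivity)]
  field_simp
  linear_combination (-(Real.log (1+Q) - c)) * hw2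

lemma Bder_deriv_nonpos (hQ : 0 < Q) (hsT : 0 ≤ sT) (hc : 0 < c)
    (h3 : 3 * Real.log (1+Q) < (1+Q)^2 - 1) :
    ∃ E, HasDerivAt (Bder sT c) E Q ∧ E ≤ 0 := by
  have hu0 : (0:ℝ) < 1 + Q := by linarith
  have hv0 : (0:ℝ) < (1+Q)^2 - 1 := by nlinarith
  have hw0 : (0:ℝ) < Real.sqrt ((1+Q)^2 - 1) := Real.sqrt_pos.2 hv0
  have hw2 : Real.sqrt ((1+Q)^2 - 1) ^ 2 = (1+Q)^2 - 1 := Real.sq_sqrt hv0.le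
  have hl0 : 0 ≤ Real.log (1+Q) := Real.log_nonneg (by linarith)
  have hnum2 : HasDerivAt (fun x : ℝ => (1+x)^2 - 1 - (Real.log (1+x) - c))
      (2*(1+Q) - 1/(1+Q)) Q := (hv' Q).sub ((hl' hQ).sub_const c)
  have hden2 : HasDerivAt (fun x : ℝ => ((1+x)^2 - 1) * Real.sqrt ((1+x)^2 - 1))
      (2*(1+Q) * Real.sqrt ((1+Q)^2-1)
        + ((1+Q)^2-1) * (1/(2*Real.sqrt ((1+Q)^2 - 1)) * (2*(1+Q)))) Q :=
    (hv' Q).mul (hw' hQ)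
  have hden0 : ((1+Q)^2 - 1) * Real.sqrt ((1+Q)^2 - 1) ≠ 0 := by positivity
  have hq2 := hnum2.div hden2 hden0
  have hB2 := hq2.const_mul sT
  refine ⟨_, hB2, ?_⟩
  set w := Real.sqrt ((1+Q)^2 - 1) with hwdef
  set l := Real.log (1+Q) with hldef
  set u := 1 + Q with hudef
  set v := (1+Q)^2 - 1 with hvdef
  set Num := (2*u - 1/u) * (v*w) - (v - (l - c)) * (2*u*w + v*(1/(2*w)*(2*u))) with hNumdef
  have e : 1/(2*w)*(2*u)*w = u := by field_simp
  have key : Num * w = (2*u - 1/u)*v^2 - (v - (l - c))*(3*u*v) := by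
    rw [hNumdef]
    calc ((2*u - 1/u) * (v*w) - (v - (l - c)) * (2*u*w + v*(1/(2*w)*(2*u)))) * w
        = (2*u - 1/u)*(v*w^2) - (v - (l-c))*(2*u*w^2 + v*(1/(2*w)*(2*u)*w)) := by ring
      _ = (2*u - 1/u)*(v*v) - (v - (l-c))*(2*u*v + v*u) := by rw [hw2, e]
      _ = (2*u - 1/u)*v^2 - (v - (l - c))*(3*u*v) := by ring
  have hinner : (2*u - 1/u)*v^2 - (v - (l - c))*(3*u*v) ≤ 0 := by
    have h3ul : 3*u*l ≤ u*v := by nlinarith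
    have hx1 : 0 ≤ (1/u)*v := by positivity
    have hx2 : 0 ≤ u*c := by positivity
    have hx3 : 0 ≤ u*v := by positivity
    nlinarith [mul_nonneg hv0.le hx1, mul_nonneg hv0.le hx2, mul_nonneg hv0.le hx3,
      mul_le_mul_of_nonneg_left h3ul hv0.le]
  have hNum : Num ≤ 0 := by
    have h := key.trans_le hinner
    nlinarith [hw0]
  have hdiv : Num / (v*w)^2 ≤ 0 := div_nonpos_of_nonpos_of_nonneg hNum (sq_nonneg _)
  exact mul_nonpos_iff.2 (Or.inl ⟨hsT, hdiv⟩)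

lemma Bder_nonneg (hQ : 0 < Q) (hsT : 0 ≤ sT) (hc : 0 ≤ c)
    (h3 : 3 * Real.log (1+Q) < (1+Q)^2 - 1) : 0 ≤ Bder sT c Q := by
  have hu0 : (0:ℝ) < 1 + Q := by linarith
  have hv0 : (0:ℝ) < (1+Q)^2 - 1 := by nlinarith
  have hw0 : (0:ℝ) < Real.sqrt ((1+Q)^2 - 1) := Real.sqrt_pos.2 hv0
  have hl0 : 0 ≤ Real.log (1+Q) := Real.log_nonneg (by linarith)
  apply mul_nonneg hsT
  apply div_nonneg _ (by positivity)
  linarith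

lemma Bfun_nonneg (hQ : 0 < Q) (hsT : 0 ≤ sT) (hlc : c ≤ Real.log (1+Q)) :
    0 ≤ Bfun sT c Q := by
  apply mul_nonneg hsT
  apply div_nonneg _ (Real.sqrt_nonneg _)
  exact mul_nonneg (by linarith) (by linarith)

lemma Bfun_eq (hQ : 0 < Q) :
    Real.sqrt T * (Real.log (1 + Q) - c) / Real.sqrt (1 - 1 / (1 + Q) ^ 2)
      = Bfun (Real.sqrt T) c Q := by
  have hu0 : (0:ℝ) < 1 + Q := by linarith
  have hv0 : (0:ℝ) < (1+Q)^2 - 1 := by nlinarith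
  have hw0 : (0:ℝ) < Real.sqrt ((1+Q)^2 - 1) := Real.sqrt_pos.2 hv0
  have h1 : 1 - 1/(1+Q)^2 = ((1+Q)^2 - 1)/(1+Q)^2 := by field_simp
  rw [h1, Real.sqrt_div hv0.le, Real.sqrt_sq hu0.le]
  unfold Bfun
  rw [div_div_eq_mul_div]
  ring

end B

theorem Pe_convex (N : ℕ) (hN : 1 ≤ N) (Pmax T R Q₀ : ℝ)
    (hP : 0 < Pmax) (hT : 0 < T) (hR : 0 < R)
    (hQ₀ : 0 < Q₀) (hQ₀eq : Real.log (1 + Q₀) / ((1 + Q₀) ^ 2 - 1) = 1 / 3)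
    (hQ₀uniq : ∀ Q : ℝ, 0 < Q → Real.log (1 + Q) / ((1 + Q) ^ 2 - 1) = 1 / 3 → Q = Q₀) :
    ConvexOn ℝ (Set.Ioo (max Q₀ (2 ^ R - 1)) (Pmax * ((N : ℝ) - 1)))
      (fun Q : ℝ =>
        1 - (1 - lowerGamma N (Q / Pmax) / Real.Gamma N) *
          (1 - gaussQ (Real.sqrt T * (Real.log (1 + Q) - R * Real.log 2) /
            Real.sqrt (1 - 1 / (1 + Q) ^ 2)))) := by
  set L := max Q₀ (2 ^ R - 1) with hLdef
  set M := Pmax * ((N : ℝ) - 1) with hMdef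
  by_cases hLM : M ≤ L
  · refine ⟨convex_Ioo _ _, fun x hx => ?_⟩
    rw [Set.Ioo_eq_empty (not_lt.2 hLM)] at hx
    exact absurd hx (Set.notMem_empty x)
  push_neg at hLM
  have hQ₀L : Q₀ ≤ L := le_max_left _ _
  have hRL : (2:ℝ) ^ R - 1 ≤ L := le_max_right _ _
  have hL0 : 0 < L := lt_of_lt_of_le hQ₀ hQ₀L
  have hM0 : 0 < M := hL0.trans hLM
  have hN1 : 0 < (N:ℝ) - 1 := by
    rcases lt_or_ge 0 ((N:ℝ) - 1) with h | h
    · exact h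
    · exfalso; nlinarith
  have hs1 : 1 ≤ (N:ℝ) - 1 := by
    have h2 : 1 < (N:ℝ) := by linarith
    have h3 : 1 < N := by exact_mod_cast h2
    have h4 : 2 ≤ N := h3
    have : (2:ℝ) ≤ (N:ℝ) := by exact_mod_cast h4
    linarith
  have hs0 : 0 < (N:ℝ) := by linarith
  have hΓ : 0 < Real.Gamma (N:ℝ) := Real.Gamma_pos_of_pos hs0
  set sT := Real.sqrt T with hsTdef
  set c := R * Real.log 2 with hcdef
  have hsT : 0 ≤ sT := Real.sqrt_nonneg T
  have hc : 0 < c := mul_pos hR (Real.log_pos one_lt_two)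
  set S := Set.Ioo L M with hSdef
  have hSconv : Convex ℝ S := convex_Ioo _ _
  have hSint : interior S = S := (isOpen_Ioo).interior_eq
  -- pointwise facts
  have hQpos : ∀ Q ∈ S, 0 < Q := fun Q hQ => hL0.trans hQ.1
  have h3 : ∀ Q ∈ S, 3 * Real.log (1+Q) < (1+Q)^2 - 1 := fun Q hQ =>
    three_log_lt hQ₀ (lt_of_le_of_lt hQ₀L hQ.1) hQ₀eq
  have hlc : ∀ Q ∈ S, c < Real.log (1+Q) := by
    intro Q hQ
    have h1 : (2:ℝ) ^ R < 1 + Q := by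
      have := hQ.1; linarith [hRL]
    have h2 := Real.log_lt_log (Real.rpow_pos_of_pos two_pos R) h1
    rwa [Real.log_rpow two_pos] at h2
  -- the first factor f₁
  set f₁ : ℝ → ℝ := fun Q => 1 - lowerGamma (N:ℝ) (Q / Pmax) / Real.Gamma (N:ℝ) with hf₁def
  have hFd : ∀ Q ∈ S, HasDerivAt (fun q => lowerGamma (N:ℝ) (q/Pmax))
      (((Q/Pmax) ^ ((N:ℝ)-1) * Real.exp (-(Q/Pmax))) * (1/Pmax)) Q := by
    intro Q hQ
    have hx : 0 < Q/Pmax := div_pos (hQpos Q hQ) hP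
    have h2 : 1 ≤ (N:ℝ) - 1 := hs1
    have := (lowerGamma_hasDerivAt (N:ℝ) h2 hx).comp Q ((hasDerivAt_id Q).div_const Pmax)
    simpa [Function.comp_def] using this
  have hGconv : ConvexOn ℝ S (fun Q => lowerGamma (N:ℝ) (Q/Pmax)) := by
    apply MonotoneOn.convexOn_of_deriv hSconv
    · exact fun Q hQ => (hFd Q hQ).continuousAt.continuousWithinAt
    · rw [hSint]
      exact fun Q hQ => (hFd Q hQ).differentiableAt.differentiableWithinAt
    · rw [hSint]
      intro x hx y hy hxy
      rw [(hFd x hx).deriv, (hFd y hy).deriv]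
      apply mul_le_mul_of_nonneg_right _ (by positivity)
      have hxm : x/Pmax ∈ Icc (0:ℝ) ((N:ℝ)-1) := by
        constructor
        · exact (div_pos (hQpos x hx) hP).le
        · rw [div_le_iff₀ hP]; nlinarith [hx.2]
      have hym : y/Pmax ∈ Icc (0:ℝ) ((N:ℝ)-1) := by
        constructor
        · exact (div_pos (hQpos y hy) hP).le
        · rw [div_le_iff₀ hP]; nlinarith [hy.2]
      exact psi_monoOn hs1 hxm hym (by apply div_le_div_of_nonneg_right hxy hP.le)
  have hGdiv : ConvexOn ℝ S (fun Q => lowerGamma (N:ℝ) (Q/Pmax) / Real.Gamma (N:ℝ)) := by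
    have h := hGconv.smul (c := (Real.Gamma (N:ℝ))⁻¹) (inv_nonneg.2 hΓ.le)
    apply convexOn_congr' h
    intro Q _
    simp [smul_eq_mul, div_eq_inv_mul]
  have hf₁conc : ConcaveOn ℝ S f₁ := by
    have h := (hGdiv.neg).add_const 1
    apply concaveOn_congr' h
    intro Q _
    simp [hf₁def]; ring
  have hf₁nonneg : ∀ ⦃Q⦄, Q ∈ S → 0 ≤ f₁ Q := by
    intro Q _
    have h := lowerGamma_le_Gamma hs0 (Q/Pmax)
    have := div_le_one_of_le₀ h hΓ.le
    simp only [hf₁def]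
    linarith
  have hf₁anti : AntitoneOn f₁ S := by
    intro x hx y hy hxy
    simp only [hf₁def]
    have h := lowerGamma_mono hs0 (div_le_div_of_nonneg_right hxy hP.le (c := Pmax))
    have := div_le_div_of_nonneg_right h hΓ.le
    linarith
  -- the second factor h₂
  set B : ℝ → ℝ := Bfun sT c with hBdef
  set h₂ : ℝ → ℝ := fun Q => 1 - gaussQ (B Q) with hh₂def
  have hBd : ∀ Q ∈ S, HasDerivAt B (Bder sT c Q) Q := fun Q hQ =>
    Bfun_hasDerivAt (hQpos Q hQ)
  have hBderAnti : AntitoneOn (Bder sT c) S := by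
    apply antitoneOn_of_deriv_nonpos hSconv
    · intro Q hQ
      obtain ⟨E, hE, _⟩ := Bder_deriv_nonpos (hQpos Q hQ) hsT hc (h3 Q hQ)
      exact hE.continuousAt.continuousWithinAt
    · rw [hSint]
      intro Q hQ
      obtain ⟨E, hE, _⟩ := Bder_deriv_nonpos (hQpos Q hQ) hsT hc (h3 Q hQ)
      exact hE.differentiableAt.differentiableWithinAt
    · rw [hSint]
      intro Q hQ
      obtain ⟨E, hE, hE0⟩ := Bder_deriv_nonpos (hQpos Q hQ) hsT hc (h3 Q hQ)
      rw [hE.deriv]; exact hE0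
  have hBconc : ConcaveOn ℝ S B := by
    apply AntitoneOn.concaveOn_of_deriv hSconv
    · exact fun Q hQ => (hBd Q hQ).continuousAt.continuousWithinAt
    · rw [hSint]
      exact fun Q hQ => (hBd Q hQ).differentiableAt.differentiableWithinAt
    · rw [hSint]
      intro x hx y hy hxy
      rw [(hBd x hx).deriv, (hBd y hy).deriv]
      exact hBderAnti hx hy hxy
  have hBmono : MonotoneOn B S := by
    apply monotoneOn_of_deriv_nonneg hSconv
    · exact fun Q hQ => (hBd Q hQ).continuousAt.continuousWithinAt
    · rw [hSint]
      exact fun Q hQ => (hBd Q hQ).differentiableAt.differentiableWithinAt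
    · rw [hSint]
      intro Q hQ
      rw [(hBd Q hQ).deriv]
      exact Bder_nonneg (hQpos Q hQ) hsT hc.le (h3 Q hQ)
  have hBmaps : Set.MapsTo B S (Ici 0) := fun Q hQ =>
    Bfun_nonneg (hQpos Q hQ) hsT (hlc Q hQ).le
  have hh₂conc : ConcaveOn ℝ S h₂ :=
    concaveOn_comp_mono (g := fun y => 1 - gaussQ y) (f := B)
      Phi_concave hBconc hBmaps (Phi_mono.monotoneOn _)
  have hh₂nonneg : ∀ ⦃Q⦄, Q ∈ S → 0 ≤ h₂ Q := by
    intro Q _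
    simp only [hh₂def]
    linarith [gaussQ_le_one (B Q)]
  have hh₂mono : MonotoneOn h₂ S := by
    intro x hx y hy hxy
    simp only [hh₂def]
    have := Phi_mono (hBmono hx hy hxy)
    simpa using this
  -- antivary
  have hanti : AntivaryOn f₁ h₂ S := by
    intro i hi j hj hij
    rcases le_total i j with h | h
    · exact hf₁anti hi hj h
    · exact absurd (hh₂mono hj hi h) (not_le.2 hij)
  have hGH : ConcaveOn ℝ S (f₁ * h₂) := hf₁conc.mul hh₂conc hf₁nonneg hh₂nonneg hanti
  have hfinal : ConvexOn ℝ S (fun Q => -(f₁ * h₂) Q + 1) := (hGH.neg).add_const 1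
  apply convexOn_congr' hfinal
  intro Q hQ
  have hA : sT * (Real.log (1 + Q) - c) /
      Real.sqrt (1 - 1 / (1 + Q) ^ 2) = B Q := Bfun_eq (hQpos Q hQ)
  simp only [Pi.mul_apply, hf₁def, hh₂def, hA]
  ring
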